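/- Let P be an m × m real stochastic matrix and let P̃ = (1/2)(P + I), regarded as a complex matrix. Then the algebraic and geometric multiplicities of the eigenvalue 1 of P̃ coincide; equivalently, the generalized eigenspace of P̃ for the eigenvalue 1 (the kernel of (P̃ − I)^m) equals the eigenspace of P̃ for the eigenvalue 1 (the kernel of P̃ − I). -/

import Mathlib

open Filter Finset Matrix

/-- Product of stochastic matrices is stochastic. -/
lemma stoch_mul {m : ℕ} {S T : Matrix (Fin m) (Fin m) ℝ}
    (hS1 : ∀ i j, 0 ≤ S i j) (hS2 : ∀ i, ∑ j, S i j = 1)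
    (hT1 : ∀ i j, 0 ≤ T i j) (hT2 : ∀ i, ∑ j, T i j = 1) :
    (∀ i j, 0 ≤ (S * T) i j) ∧ (∀ i, ∑ j, (S * T) i j = 1) := by
  constructor
  · intro i j
    rw [Matrix.mul_apply]
    exact Finset.sum_nonneg fun k _ => mul_nonneg (hS1 i k) (hT1 k j)
  · intro i
    simp only [Matrix.mul_apply]
    rw [Finset.sum_comm]
    simp [← Finset.mul_sum, hT2, hS2 i]

lemma stoch_pow {m : ℕ} {Q : Matrix (Fin m) (Fin m) ℝ}
    (h1 : ∀ i j, 0 ≤ Q i j) (h2 : ∀ i, ∑ j, Q i j = 1) (n : ℕ) :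
    (∀ i j, 0 ≤ (Q ^ n) i j) ∧ (∀ i, ∑ j, (Q ^ n) i j = 1) := by
  induction n with
  | zero =>
    constructor
    · intro i j
      simp only [pow_zero, Matrix.one_apply]
      split <;> norm_num
    · intro i
      simp [pow_zero, Matrix.one_apply]
  | succ n ih =>
    rw [pow_succ]
    exact stoch_mul ih.1 ih.2 h1 h2

/-- Stochastic matrices don't increase the entrywise sup of complex vectors
    (here bounded by the ℓ¹ norm for simplicity). -/
lemma stoch_bound {m : ℕ} {S : Matrix (Fin m) (Fin m) ℝ}
    (h1 : ∀ i j, 0 ≤ S i j) (h2 : ∀ i, ∑ j, S i j = 1)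
    (v : Fin m → ℂ) (M : ℝ) (hM : ∀ j, ‖v j‖ ≤ M) (i : Fin m) :
    ‖(S.map Complex.ofReal).mulVec v i‖ ≤ M := by
  have : (S.map Complex.ofReal).mulVec v i = ∑ j, (S i j : ℂ) * v j := by
    simp [Matrix.mulVec, dotProduct, Matrix.map_apply]
  rw [this]
  calc ‖∑ j, (S i j : ℂ) * v j‖
      ≤ ∑ j, ‖(S i j : ℂ) * v j‖ := by
        exact norm_sum_le _ _
    _ = ∑ j, S i j * ‖v j‖ := by
        apply Finset.sum_congr rfl
        intro j _
        rw [norm_mul, Complex.norm_real, Real.norm_eq_abs, abs_of_nonneg (h1 i j)]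
    _ ≤ ∑ j, S i j * M := by
        apply Finset.sum_le_sum
        intro j _
        exact mul_le_mul_of_nonneg_left (hM j) (h1 i j)
    _ = M := by rw [← Finset.sum_mul, h2 i, one_mul]

/-- Core: for stochastic Q, ker (Q-1)² ⊆ ker (Q-1) over ℂ. -/
lemma key {m : ℕ} {Q : Matrix (Fin m) (Fin m) ℝ}
    (h1 : ∀ i j, 0 ≤ Q i j) (h2 : ∀ i, ∑ j, Q i j = 1)
    (v : Fin m → ℂ)
    (hv : (Q.map Complex.ofReal - 1).mulVec ((Q.map Complex.ofReal - 1).mulVec v) = 0) :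
    (Q.map Complex.ofReal - 1).mulVec v = 0 := by
  set Q' := Q.map Complex.ofReal with hQ'
  set w := (Q' - 1).mulVec v with hw
  by_contra hne
  have hwex : ∃ i, w i ≠ 0 := by
    by_contra h
    push_neg at h
    exact hne (funext h)
  obtain ⟨i, hi⟩ := hwex
  -- Q' w = w
  have hQw : Q'.mulVec w = w := by
    have := hv
    rw [Matrix.sub_mulVec, Matrix.one_mulVec, sub_eq_zero] at this
    exact this
  -- Q' v = v + w
  have hQv : Q'.mulVec v = v + w := by
    rw [hw, Matrix.sub_mulVec, Matrix.one_mulVec]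
    abel
  -- Q'^n v = v + n w
  have hpow : ∀ n : ℕ, (Q' ^ n).mulVec v = v + (n : ℂ) • w := by
    intro n
    induction n with
    | zero => simp
    | succ n ih =>
      rw [pow_succ', ← Matrix.mulVec_mulVec, ih, Matrix.mulVec_add, hQv,
        Matrix.mulVec_smul, hQw]
      push_cast
      rw [add_smul, one_smul]
      abel
  -- bound
  set M := ∑ j, ‖v j‖ with hMdef
  have hMb : ∀ j, ‖v j‖ ≤ M := by
    intro j
    exact Finset.single_le_sum (f := fun j => ‖v j‖)
      (fun k _ => norm_nonneg _) (Finset.mem_univ j)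
  have hbound : ∀ n : ℕ, ‖(v + (n : ℂ) • w) i‖ ≤ M := by
    intro n
    rw [← hpow n]
    have hmap : Q' ^ n = (Q ^ n).map Complex.ofReal := by
      have hco : Q.map Complex.ofReal = Q.map ⇑Complex.ofRealHom := rfl
      have hco2 : (Q ^ n).map Complex.ofReal = (Q ^ n).map ⇑Complex.ofRealHom := rfl
      rw [hQ', hco, hco2, ← RingHom.mapMatrix_apply, ← RingHom.mapMatrix_apply, ← map_pow]
    rw [hmap]
    exact stoch_bound (stoch_pow h1 h2 n).1 (stoch_pow h1 h2 n).2 v M hMb i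
  -- contradiction for large n
  obtain ⟨n, hn⟩ := exists_nat_gt ((M + ‖v i‖) / ‖w i‖)
  have hwpos : 0 < ‖w i‖ := norm_pos_iff.mpr hi
  have hgt : M + ‖v i‖ < n * ‖w i‖ := by
    rwa [div_lt_iff₀ hwpos] at hn
  have h1' : (n : ℝ) * ‖w i‖ - ‖v i‖
      ≤ ‖v i + (n : ℂ) * w i‖ := by
    have habs : ‖(n : ℂ) * w i‖ = n * ‖w i‖ := by
      rw [norm_mul, Complex.norm_natCast]
    have htri : ‖(n : ℂ) * w i‖
        ≤ ‖v i + (n : ℂ) * w i‖ + ‖v i‖ := by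
      have h := norm_add_le (v i + (n : ℂ) * w i) (-(v i))
      simpa using h
    linarith
  have h2' := hbound n
  simp only [Pi.add_apply, Pi.smul_apply, smul_eq_mul] at h2'
  linarith

lemma key_iter {m : ℕ} {Q : Matrix (Fin m) (Fin m) ℝ}
    (h1 : ∀ i j, 0 ≤ Q i j) (h2 : ∀ i, ∑ j, Q i j = 1) :
    ∀ (k : ℕ) (v : Fin m → ℂ),
      ((Q.map Complex.ofReal - 1) ^ (k + 1)).mulVec v = 0 →
      (Q.map Complex.ofReal - 1).mulVec v = 0 := by
  intro k
  induction k with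
  | zero => intro v h; simpa using h
  | succ k ih =>
    intro v h
    have h' : ((Q.map Complex.ofReal - 1) ^ (k + 1)).mulVec
        ((Q.map Complex.ofReal - 1).mulVec v) = 0 := by
      rw [Matrix.mulVec_mulVec, ← pow_succ]
      exact h
    exact key h1 h2 v (ih _ h')

theorem generalized_eigenspace_eq_eigenspace_for_one
    (m : ℕ) (P : Matrix (Fin m) (Fin m) ℝ)
    (hP_nonneg : ∀ i j, 0 ≤ P i j) (hP_rowsum : ∀ i, ∑ j, P i j = 1) :
    LinearMap.ker (Matrix.toLin'
        ((((1 / 2 : ℝ) • (P + 1)).map (Complex.ofReal) - 1) ^ m)) =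
    LinearMap.ker (Matrix.toLin'
        (((1 / 2 : ℝ) • (P + 1)).map (Complex.ofReal) - 1)) := by
  set Q : Matrix (Fin m) (Fin m) ℝ := (1 / 2 : ℝ) • (P + 1) with hQdef
  have hQ1 : ∀ i j, 0 ≤ Q i j := by
    intro i j
    simp only [hQdef, Matrix.smul_apply, Matrix.add_apply, Matrix.one_apply, smul_eq_mul]
    have := hP_nonneg i j
    split <;> linarith
  have hQ2 : ∀ i, ∑ j, Q i j = 1 := by
    intro i
    simp only [hQdef, Matrix.smul_apply, Matrix.add_apply, smul_eq_mul]
    rw [← Finset.mul_sum, Finset.sum_add_distrib, hP_rowsum i]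
    simp [Matrix.one_apply]
    norm_num
  ext x
  simp only [LinearMap.mem_ker, Matrix.toLin'_apply]
  cases m with
  | zero =>
    constructor <;> intro _ <;> exact Subsingleton.elim _ _
  | succ k =>
    constructor
    · intro h
      exact key_iter hQ1 hQ2 k x h
    · intro h
      rw [pow_succ, ← Matrix.mulVec_mulVec, h, Matrix.mulVec_zero]
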